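/- Consequently, if π = |Y − p(θ₀ᵀZ)| under a correctly specified logistic model and the Fisher information matrix A = E[p(θ₀ᵀZ)(1−p(θ₀ᵀZ)) Z Zᵀ] is invertible, then the sandwich matrix A^{-1} V_π A^{-1} equals 2 A^{-1}, i.e., twice the asymptotic variance of the full-sample MLE. -/

import Mathlib

open MeasureTheory Matrix

noncomputable def logistic (t : ℝ) : ℝ := Real.exp t / (1 + Real.exp t)

lemma logistic_pos (t : ℝ) : 0 < logistic t :=
  div_pos (Real.exp_pos t) (by positivity)

lemma logistic_lt_one (t : ℝ) : logistic t < 1 := by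
  rw [logistic, div_lt_one (by positivity)]; linarith

lemma logistic_measurable : Measurable logistic :=
  (Real.continuous_exp.div (continuous_const.add Real.continuous_exp)
    (fun x => (by positivity : (1:ℝ) + Real.exp x ≠ 0))).measurable

/-- Under the correctly specified logistic model with LCC sampling,
the sandwich matrix `A⁻¹ V_π A⁻¹` equals `2 A⁻¹`, twice the asymptotic
variance of the full-sample MLE. -/
theorem stmt_7 {Ω : Type*} [MeasurableSpace Ω] (μ : Measure Ω) [IsProbabilityMeasure μ]
    {q : ℕ} (Z : Ω → Fin (q + 1) → ℝ) (hZmeas : Measurable Z)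
    (hZ0 : ∀ ω, Z ω 0 = 1) (hZsq : Integrable (fun ω => ∑ i, (Z ω i) ^ 2) μ)
    (θ₀ : Fin (q + 1) → ℝ)
    (Y : Ω → ℝ) (hYmeas : Measurable Y) (hY01 : ∀ ω, Y ω = 0 ∨ Y ω = 1)
    (hcond : μ[Y | MeasurableSpace.comap Z inferInstance]
      =ᵐ[μ] fun ω => logistic (θ₀ ⬝ᵥ Z ω))
    (A Vπ : Matrix (Fin (q + 1)) (Fin (q + 1)) ℝ)
    (hA : A = Matrix.of fun i j =>
      ∫ ω, logistic (θ₀ ⬝ᵥ Z ω) * (1 - logistic (θ₀ ⬝ᵥ Z ω)) * (Z ω i * Z ω j) ∂μ)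
    (hApd : A.PosDef)
    (hV : Vπ = Matrix.of fun i j =>
      ∫ ω, (Y ω - logistic (θ₀ ⬝ᵥ Z ω)) ^ 2 * (Z ω i * Z ω j) /
        |Y ω - logistic (θ₀ ⬝ᵥ Z ω)| ∂μ) :
    A⁻¹ * Vπ * A⁻¹ = (2 : ℝ) • A⁻¹ := by
  classical
  have hm : MeasurableSpace.comap Z inferInstance ≤ ‹MeasurableSpace Ω› :=
    measurable_iff_comap_le.mp hZmeas
  have hZm : Measurable[MeasurableSpace.comap Z inferInstance] Z :=
    measurable_iff_comap_le.mpr le_rfl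
  set p : Ω → ℝ := fun ω => logistic (θ₀ ⬝ᵥ Z ω) with hp_def
  have hdotφ : Measurable fun v : Fin (q + 1) → ℝ => θ₀ ⬝ᵥ v := by
    simp only [dotProduct]
    exact Finset.measurable_sum Finset.univ
      (fun i _ => measurable_const.mul (measurable_pi_apply i))
  have hp_m : Measurable[MeasurableSpace.comap Z inferInstance] p := (logistic_measurable.comp hdotφ).comp hZm
  have hp_meas : Measurable p := (logistic_measurable.comp hdotφ).comp hZmeas
  have hp0 : ∀ ω, 0 < p ω := fun ω => logistic_pos _
  have hp1 : ∀ ω, p ω < 1 := fun ω => logistic_lt_one _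
  haveI : SigmaFinite (μ.trim hm) := inferInstance
  have hY_int : Integrable Y μ := by
    refine (integrable_const (1 : ℝ)).mono hYmeas.aestronglyMeasurable
      (Filter.Eventually.of_forall fun ω => ?_)
    rcases hY01 ω with h | h <;> simp [h]
  have key : ∀ i j,
      (∫ ω, (Y ω - p ω) ^ 2 * (Z ω i * Z ω j) / |Y ω - p ω| ∂μ) =
        2 * ∫ ω, p ω * (1 - p ω) * (Z ω i * Z ω j) ∂μ := by
    intro i j
    have hZi : Measurable fun ω => Z ω i := (measurable_pi_apply i).comp hZmeas
    have hZj : Measurable fun ω => Z ω j := (measurable_pi_apply j).comp hZmeas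
    have hZij_m : Measurable[MeasurableSpace.comap Z inferInstance] fun ω => Z ω i * Z ω j :=
      ((measurable_pi_apply i).comp hZm).mul ((measurable_pi_apply j).comp hZm)
    -- generic integrability
    have hint : ∀ c : Ω → ℝ, Measurable c → (∀ ω, |c ω| ≤ 1) →
        Integrable (fun ω => c ω * (Z ω i * Z ω j)) μ := by
      intro c hc hcb
      refine hZsq.mono ((hc.mul (hZi.mul hZj)).aestronglyMeasurable)
        (Filter.Eventually.of_forall fun ω => ?_)
      simp only [Real.norm_eq_abs]
      have h1 : (Z ω i) ^ 2 ≤ ∑ k, (Z ω k) ^ 2 :=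
        Finset.single_le_sum (f := fun k => (Z ω k) ^ 2) (fun k _ => sq_nonneg _) (Finset.mem_univ i)
      have h2 : (Z ω j) ^ 2 ≤ ∑ k, (Z ω k) ^ 2 :=
        Finset.single_le_sum (f := fun k => (Z ω k) ^ 2) (fun k _ => sq_nonneg _) (Finset.mem_univ j)
      have h3 : |∑ k, (Z ω k) ^ 2| = ∑ k, (Z ω k) ^ 2 :=
        abs_of_nonneg (Finset.sum_nonneg fun k _ => sq_nonneg _)
      rw [h3, abs_mul, abs_mul]
      nlinarith [hcb ω, abs_nonneg (c ω), abs_nonneg (Z ω i), abs_nonneg (Z ω j),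
        sq_abs (Z ω i), sq_abs (Z ω j), sq_nonneg (|Z ω i| - |Z ω j|),
        mul_nonneg (abs_nonneg (Z ω i)) (abs_nonneg (Z ω j))]
    set f : Ω → ℝ := fun ω => (1 - 2 * p ω) * (Z ω i * Z ω j) with hf_def
    have hf_m : StronglyMeasurable[MeasurableSpace.comap Z inferInstance] f :=
      ((measurable_const.sub (hp_m.const_mul 2)).mul hZij_m).stronglyMeasurable
    have hb : ∀ ω, |1 - 2 * p ω| ≤ 1 := by
      intro ω
      rw [abs_le]
      constructor <;> nlinarith [hp0 ω, hp1 ω]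
    have hfY_int : Integrable (f * Y) μ := by
      have h := hint (fun ω => (1 - 2 * p ω) * Y ω)
        ((measurable_const.sub (hp_meas.const_mul 2)).mul hYmeas)
        (fun ω => by
          rcases hY01 ω with h | h <;> rw [abs_mul, h] <;> simp [hb ω])
      have heq : (fun ω => ((1 - 2 * p ω) * Y ω) * (Z ω i * Z ω j)) = f * Y := by
        funext ω; simp only [Pi.mul_apply, hf_def]; ring
      rwa [heq] at h
    have hfp_int : Integrable (fun ω => f ω * p ω) μ := by
      have h := hint (fun ω => (1 - 2 * p ω) * p ω)
        ((measurable_const.sub (hp_meas.const_mul 2)).mul hp_meas)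
        (fun ω => by
          rw [abs_mul]
          have := hb ω
          have h0 := hp0 ω
          have h1 := hp1 ω
          have : |p ω| ≤ 1 := by rw [abs_of_pos h0]; linarith
          nlinarith [abs_nonneg (1 - 2 * p ω), abs_nonneg (p ω), hb ω])
      refine h.congr (Filter.Eventually.of_forall fun ω => ?_)
      simp only [hf_def]; ring
    have hpZ_int : Integrable (fun ω => p ω * (Z ω i * Z ω j)) μ :=
      hint p hp_meas (fun ω => by rw [abs_of_pos (hp0 ω)]; linarith [hp1 ω])
    -- pull-out property
    have hpull : μ[f * Y | MeasurableSpace.comap Z inferInstance] =ᵐ[μ] f * μ[Y | MeasurableSpace.comap Z inferInstance] :=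
      condExp_mul_of_stronglyMeasurable_left hf_m hfY_int hY_int
    have h1 : ∫ ω, f ω * Y ω ∂μ = ∫ ω, f ω * p ω ∂μ := by
      have e1 : ∫ ω, (f * Y) ω ∂μ
          = ∫ ω, (μ[f * Y | MeasurableSpace.comap Z inferInstance]) ω ∂μ :=
        (integral_condExp hm).symm
      calc ∫ ω, f ω * Y ω ∂μ
          = ∫ ω, (μ[f * Y | MeasurableSpace.comap Z inferInstance]) ω ∂μ := e1
        _ = ∫ ω, f ω * p ω ∂μ := by
            refine integral_congr_ae ?_
            filter_upwards [hpull, hcond] with ω h₁ h₂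
            rw [h₁, Pi.mul_apply, h₂]
    -- pointwise identity
    have hpt : ∀ ω, (Y ω - p ω) ^ 2 * (Z ω i * Z ω j) / |Y ω - p ω| =
        f ω * Y ω + p ω * (Z ω i * Z ω j) := by
      intro ω
      have h0 := hp0 ω
      have h1 := hp1 ω
      rcases hY01 ω with h | h
      · have habs : |Y ω - p ω| = p ω := by
          rw [h, zero_sub, abs_neg, abs_of_pos h0]
        rw [habs, h, hf_def]
        field_simp
        ring
      · have habs : |Y ω - p ω| = 1 - p ω := by
          rw [h, abs_of_pos (by linarith)]
        rw [habs, h, hf_def]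
        have hne : (1 : ℝ) - p ω ≠ 0 := by linarith
        field_simp
        ring
    calc ∫ ω, (Y ω - p ω) ^ 2 * (Z ω i * Z ω j) / |Y ω - p ω| ∂μ
        = ∫ ω, f ω * Y ω + p ω * (Z ω i * Z ω j) ∂μ :=
          integral_congr_ae (Filter.Eventually.of_forall hpt)
      _ = (∫ ω, f ω * Y ω ∂μ) + ∫ ω, p ω * (Z ω i * Z ω j) ∂μ :=
          integral_add hfY_int hpZ_int
      _ = (∫ ω, f ω * p ω ∂μ) + ∫ ω, p ω * (Z ω i * Z ω j) ∂μ := by rw [h1]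
      _ = ∫ ω, f ω * p ω + p ω * (Z ω i * Z ω j) ∂μ :=
          (integral_add hfp_int hpZ_int).symm
      _ = ∫ ω, 2 * (p ω * (1 - p ω) * (Z ω i * Z ω j)) ∂μ := by
          refine integral_congr_ae (Filter.Eventually.of_forall fun ω => ?_)
          simp only [hf_def]; ring
      _ = 2 * ∫ ω, p ω * (1 - p ω) * (Z ω i * Z ω j) ∂μ := integral_const_mul 2 _
  have hVA : Vπ = (2 : ℝ) • A := by
    rw [hV, hA]
    ext i j
    simp only [Matrix.smul_apply, Matrix.of_apply, smul_eq_mul]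
    exact key i j
  have hdet : IsUnit A.det := isUnit_iff_ne_zero.mpr hApd.det_pos.ne'
  rw [hVA, Matrix.mul_smul, Matrix.smul_mul, Matrix.nonsing_inv_mul A hdet, one_mul]
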